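/- Let h₁,…,h_K ∈ ℂ^N, γ_k > 0, P > 0. The optimal value of the problem maximize ∑_k τ_k log₂(1 + (γ_k/τ_k)·h_k^H V h_k) over τ ∈ ℝ^{K+1}_{≥0} with ∑_{k=0}^K τ_k ≤ 1 and V ⪰ 0 with Tr(V) ≤ τ₀ P equals max_{τ₀ ∈ [0,1]} (1 − τ₀)·log₂(1 + τ₀/(1 − τ₀)·P·λ_max(G G^H)), where G = [√γ₁ h₁, …, √γ_K h_K]. -/

import Mathlib

open Matrix ComplexOrder

lemma aux_concave_log1p : ConcaveOn ℝ (Set.Ici 0) (fun t : ℝ => Real.log (1 + t)) := by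
  refine ⟨convex_Ici 0, ?_⟩
  intro x hx y hy a b ha hb hab
  have h1 : (1 : ℝ) + x ∈ Set.Ioi (0:ℝ) := by
    simp only [Set.mem_Ioi]; linarith [Set.mem_Ici.mp hx]
  have h2 : (1 : ℝ) + y ∈ Set.Ioi (0:ℝ) := by
    simp only [Set.mem_Ioi]; linarith [Set.mem_Ici.mp hy]
  have := strictConcaveOn_log_Ioi.concaveOn.2 h1 h2 ha hb hab
  have e : a • (1 + x) + b • (1 + y) = 1 + (a • x + b • y) := by
    simp only [smul_eq_mul]; nlinarith
  rw [e] at this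
  simpa using this

lemma aux_jensen_log1p {K : ℕ} (w x : Fin K → ℝ) (hw : ∀ k, 0 ≤ w k)
    (hw1 : ∑ k, w k = 1) (hx : ∀ k, 0 ≤ x k) :
    ∑ k, w k * Real.log (1 + x k) ≤ Real.log (1 + ∑ k, w k * x k) := by
  have := aux_concave_log1p.le_map_sum (t := Finset.univ) (w := w) (p := x)
    (fun i _ => hw i) hw1 (fun i _ => hx i)
  simpa using this

lemma aux_trace_quad_le {N K : ℕ} (G : Matrix (Fin N) (Fin K) ℂ)
    (V : Matrix (Fin N) (Fin N) ℂ) (hV : V.PosSemidef) (lam : ℝ)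
    (hlam : ∀ i, (Matrix.isHermitian_mul_conjTranspose_self G).eigenvalues i ≤ lam) :
    ∑ k, ((star fun n => G n k) ⬝ᵥ (V *ᵥ fun n => G n k)).re ≤ V.trace.re * lam := by
  classical
  set A := G * Gᴴ with hAdef
  have hA : A.IsHermitian := Matrix.isHermitian_mul_conjTranspose_self G
  set U : Matrix (Fin N) (Fin N) ℂ := (hA.eigenvectorUnitary : Matrix (Fin N) (Fin N) ℂ) with hUdef
  set W := Uᴴ * V * U with hWdef
  have hW : W.PosSemidef := hV.conjTranspose_mul_mul_same U
  have hUU : U * Uᴴ = 1 := by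
    have := (Matrix.mem_unitaryGroup_iff).mp (hA.eigenvectorUnitary).2
    simpa [Matrix.star_eq_conjTranspose] using this
  have step1 : ∑ k, ((star fun n => G n k) ⬝ᵥ (V *ᵥ fun n => G n k)) = (V * A).trace := by
    rw [show V * A = V * G * Gᴴ by rw [hAdef, Matrix.mul_assoc], Matrix.trace_mul_cycle]
    simp only [Matrix.trace, Matrix.diag_apply, Matrix.mul_apply, Matrix.conjTranspose_apply,
      dotProduct, Matrix.mulVec, Pi.star_apply]
    refine Finset.sum_congr rfl fun k _ => ?_
    simp_rw [Finset.mul_sum, Finset.sum_mul]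
    rw [Finset.sum_comm]
    exact Finset.sum_congr rfl fun m _ => Finset.sum_congr rfl fun n _ => by ring
  have step2 : (V * A).trace
      = (W * Matrix.diagonal (fun i => (hA.eigenvalues i : ℂ))).trace := by
    conv_lhs => rw [hA.spectral_theorem, Unitary.conjStarAlgAut_apply]
    rw [Matrix.star_eq_conjTranspose]
    rw [hWdef]
    rw [show V * (U * Matrix.diagonal (RCLike.ofReal ∘ hA.eigenvalues) * Uᴴ)
        = (V * U * Matrix.diagonal (RCLike.ofReal ∘ hA.eigenvalues)) * Uᴴ by
      simp only [Matrix.mul_assoc]]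
    rw [Matrix.trace_mul_comm]
    simp only [Matrix.mul_assoc]
    rfl
  have hdiag : ∀ i, 0 ≤ (W i i).re := by
    intro i
    have := hW.re_dotProduct_nonneg (Pi.single i 1)
    simpa [Matrix.mulVec_single, dotProduct, Pi.single_apply,
      Finset.sum_ite_eq, Finset.mul_sum] using this
  have step3 : (W * Matrix.diagonal (fun i => (hA.eigenvalues i : ℂ))).trace.re
      = ∑ i, (W i i).re * hA.eigenvalues i := by
    simp [Matrix.trace, Matrix.mul_diagonal, Complex.mul_re]
  have step4 : (W.trace).re = V.trace.re := by
    have : W.trace = V.trace := by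
      rw [hWdef, Matrix.trace_mul_cycle, hUU, Matrix.one_mul]
    rw [this]
  calc ∑ k, ((star fun n => G n k) ⬝ᵥ (V *ᵥ fun n => G n k)).re
      = (∑ k, ((star fun n => G n k) ⬝ᵥ (V *ᵥ fun n => G n k))).re := (Complex.re_sum _ _).symm
    _ = (W * Matrix.diagonal (fun i => (hA.eigenvalues i : ℂ))).trace.re := by rw [step1, step2]
    _ = ∑ i, (W i i).re * hA.eigenvalues i := step3
    _ ≤ ∑ i, (W i i).re * lam :=
        Finset.sum_le_sum fun i _ => mul_le_mul_of_nonneg_left (hlam i) (hdiag i)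
    _ = W.trace.re * lam := by
        rw [Matrix.trace, Complex.re_sum, Finset.sum_mul]; rfl
    _ = V.trace.re * lam := by rw [step4]

lemma aux_vmv_dot {N : ℕ} (u v x y : Fin N → ℂ) :
    star x ⬝ᵥ ((Matrix.vecMulVec u (star v)) *ᵥ y) = (star x ⬝ᵥ u) * (star v ⬝ᵥ y) := by
  rw [dotProduct, dotProduct, dotProduct, Finset.sum_mul_sum]
  simp only [Matrix.mulVec, Matrix.vecMulVec, dotProduct, Matrix.of_apply,
    Pi.star_apply, Finset.mul_sum]
  refine Finset.sum_congr rfl fun i _ => Finset.sum_congr rfl fun j _ => by ring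

lemma aux_star_dot {N : ℕ} (u x : Fin N → ℂ) :
    star u ⬝ᵥ x = (starRingEnd ℂ) (star x ⬝ᵥ u) := by
  simp only [dotProduct, Pi.star_apply, map_sum, _root_.map_mul]
  exact Finset.sum_congr rfl fun i _ => by
    simp [RingHomCompTriple.comp_apply, Complex.conj_conj, mul_comm]

lemma aux_vmv_psd {N : ℕ} (u : Fin N → ℂ) : (Matrix.vecMulVec u (star u)).PosSemidef := by
  exact Matrix.posSemidef_vecMulVec_self_star u

lemma aux_val_le (P lam τ₀ : ℝ) (hlam : 0 ≤ lam) (h0 : 0 ≤ τ₀) (h1 : τ₀ ≤ 1) (hP : 0 ≤ P) :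
    (1 - τ₀) * Real.logb 2 (1 + τ₀ / (1 - τ₀) * P * lam) ≤ P * lam / Real.log 2 := by
  have hlog2 : 0 < Real.log 2 := Real.log_pos one_lt_two
  have hc : 0 ≤ τ₀ / (1 - τ₀) * P * lam :=
    mul_nonneg (mul_nonneg (div_nonneg h0 (by linarith)) hP) hlam
  have hlog : Real.logb 2 (1 + τ₀ / (1 - τ₀) * P * lam)
      ≤ (τ₀ / (1 - τ₀) * P * lam) / Real.log 2 := by
    rw [Real.logb]
    have hl := Real.log_le_sub_one_of_pos (x := 1 + τ₀ / (1 - τ₀) * P * lam) (by linarith)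
    have : Real.log (1 + τ₀ / (1 - τ₀) * P * lam) ≤ τ₀ / (1 - τ₀) * P * lam := by linarith
    gcongr
  calc (1 - τ₀) * Real.logb 2 (1 + τ₀ / (1 - τ₀) * P * lam)
      ≤ (1 - τ₀) * ((τ₀ / (1 - τ₀) * P * lam) / Real.log 2) :=
        mul_le_mul_of_nonneg_left hlog (by linarith)
    _ ≤ P * lam / Real.log 2 := by
        rcases eq_or_lt_of_le h1 with he | hlt
        · rw [← he]; simp; positivity
        · have hne : (1:ℝ) - τ₀ ≠ 0 := by linarith
          rw [show (1 - τ₀) * ((τ₀ / (1 - τ₀) * P * lam) / Real.log 2)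
              = τ₀ * (P * lam / Real.log 2) from by field_simp [hne, hlog2.ne']]
          have hX : 0 ≤ P * lam / Real.log 2 := by positivity
          nlinarith

open Matrix ComplexOrder in
/-- Main reduction theorem: the optimal value of the joint time-allocation and
energy-covariance (SDR) sum-throughput problem equals
`max_{τ₀ ∈ [0,1]} (1 − τ₀)·log₂(1 + τ₀/(1 − τ₀)·P·λ_max(G Gᴴ))`, where
`G = [√γ₁ h₁, …, √γ_K h_K]`. -/
theorem stmt_11 (N K : ℕ) (hN : 0 < N) (h : Fin K → (Fin N → ℂ))
    (γ : Fin K → ℝ) (hγ : ∀ k, 0 < γ k) (P : ℝ) (hP : 0 < P) :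
    sSup {x : ℝ | ∃ (τ : Fin (K+1) → ℝ) (V : Matrix (Fin N) (Fin N) ℂ),
        (∀ i, 0 ≤ τ i) ∧ (∑ i, τ i) ≤ 1 ∧ V.PosSemidef ∧
        V.trace.re ≤ τ 0 * P ∧
        x = ∑ k : Fin K, τ k.succ *
              Real.logb 2 (1 + γ k / τ k.succ * (star (h k) ⬝ᵥ (V *ᵥ h k)).re)} =
    sSup {y : ℝ | ∃ τ₀ ∈ Set.Icc (0:ℝ) 1,
        y = (1 - τ₀) * Real.logb 2 (1 + τ₀ / (1 - τ₀) * P *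
          ⨆ i, (Matrix.isHermitian_mul_conjTranspose_self
            (Matrix.of fun (n : Fin N) (k : Fin K) =>
              ((Real.sqrt (γ k) : ℝ) : ℂ) * h k n)).eigenvalues i)} := by
  classical
  haveI : Nonempty (Fin N) := Fin.pos_iff_nonempty.mp hN
  set G : Matrix (Fin N) (Fin K) ℂ :=
    Matrix.of fun (n : Fin N) (k : Fin K) => ((Real.sqrt (γ k) : ℝ) : ℂ) * h k n with hG
  set lam : ℝ := ⨆ i, (Matrix.isHermitian_mul_conjTranspose_self G).eigenvalues i with hlamdef
  have hA : (G * Gᴴ).IsHermitian := Matrix.isHermitian_mul_conjTranspose_self G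
  obtain ⟨i₀, hi₀⟩ := Finite.exists_max (fun i => hA.eigenvalues i)
  have hlam_eq : lam = hA.eigenvalues i₀ := by
    rw [hlamdef]
    exact le_antisymm (ciSup_le hi₀) (le_ciSup (Set.finite_range _).bddAbove i₀)
  have hlam_ub : ∀ i, hA.eigenvalues i ≤ lam := fun i => le_trans (hi₀ i) hlam_eq.ge
  have hlam0 : 0 ≤ lam := by
    rw [hlam_eq]
    exact (Matrix.posSemidef_self_mul_conjTranspose G).eigenvalues_nonneg i₀
  -- eigenvector facts
  set υ : Fin N → ℂ := ⇑(hA.eigenvectorBasis i₀) with hυ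
  have hnorm1 : star υ ⬝ᵥ υ = 1 := by
    have h1 : ‖hA.eigenvectorBasis i₀‖ = 1 := hA.eigenvectorBasis.orthonormal.1 i₀
    have h2 := EuclideanSpace.inner_eq_star_dotProduct (hA.eigenvectorBasis i₀)
      (hA.eigenvectorBasis i₀)
    rw [inner_self_eq_norm_sq_to_K, h1] at h2
    have h3 := h2.symm
    simp at h3
    rw [dotProduct_comm] at h3
    exact h3
  have hAv : star υ ⬝ᵥ ((G * Gᴴ) *ᵥ υ) = (hA.eigenvalues i₀ : ℂ) := by
    rw [hA.mulVec_eigenvectorBasis, dotProduct_smul, hnorm1]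
    simp [Complex.real_smul]
  have hexp : star υ ⬝ᵥ ((G * Gᴴ) *ᵥ υ)
      = ∑ k, ((starRingEnd ℂ) ((Gᴴ *ᵥ υ) k) * (Gᴴ *ᵥ υ) k) := by
    rw [← Matrix.mulVec_mulVec, Matrix.dotProduct_mulVec]
    have : star υ ᵥ* G = star (Gᴴ *ᵥ υ) := by
      rw [Matrix.star_mulVec, Matrix.conjTranspose_conjTranspose]
    rw [this]
    simp [dotProduct, Pi.star_apply]
  set c : Fin K → ℂ := fun k => star (h k) ⬝ᵥ υ with hc
  set nsq : Fin K → ℝ := fun k => Complex.normSq (c k) with hnsq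
  have hnsq0 : ∀ k, 0 ≤ nsq k := fun k => Complex.normSq_nonneg _
  have hwk : ∀ k, (Gᴴ *ᵥ υ) k = ((Real.sqrt (γ k) : ℝ) : ℂ) * c k := by
    intro k
    simp only [Matrix.mulVec, dotProduct, Matrix.conjTranspose_apply, hG,
      Matrix.of_apply, star_mul', Complex.star_def, Complex.conj_ofReal, hc, Pi.star_apply,
      Finset.mul_sum]
    exact Finset.sum_congr rfl fun n _ => by ring
  have key : ∑ k, γ k * nsq k = lam := by
    have h1 : ((lam : ℝ) : ℂ) = ∑ k, ((γ k * nsq k : ℝ) : ℂ) := by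
      rw [hlam_eq, ← hAv, hexp]
      refine Finset.sum_congr rfl fun k _ => ?_
      rw [← Complex.normSq_eq_conj_mul_self, hwk k, Complex.normSq_mul,
        Complex.normSq_ofReal, Real.mul_self_sqrt (hγ k).le]
    have h2 : ((∑ k, γ k * nsq k : ℝ) : ℂ) = ((lam : ℝ) : ℂ) := by
      rw [h1]; push_cast; ring
    exact_mod_cast h2
  -- Step A: achievability
  have memS : ∀ τ₀ : ℝ, 0 ≤ τ₀ → τ₀ ≤ 1 →
      ∃ (τ : Fin (K+1) → ℝ) (V : Matrix (Fin N) (Fin N) ℂ),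
        (∀ i, 0 ≤ τ i) ∧ (∑ i, τ i) ≤ 1 ∧ V.PosSemidef ∧ V.trace.re ≤ τ 0 * P ∧
        (1 - τ₀) * Real.logb 2 (1 + τ₀ / (1 - τ₀) * P * lam)
          = ∑ k : Fin K, τ k.succ *
              Real.logb 2 (1 + γ k / τ k.succ * (star (h k) ⬝ᵥ (V *ᵥ h k)).re) := by
    intro τ₀ h0 h1
    set r : ℝ := Real.sqrt (τ₀ * P) with hrdef
    have hr2 : r * r = τ₀ * P := Real.mul_self_sqrt (mul_nonneg h0 hP.le)
    set υ' : Fin N → ℂ := ((r : ℝ) : ℂ) • υ with hυ'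
    set τk : Fin K → ℝ := fun k => (1 - τ₀) * (γ k * nsq k) / lam with hτk
    have hqk : ∀ k, (star (h k) ⬝ᵥ ((Matrix.vecMulVec υ' (star υ')) *ᵥ h k)).re
        = τ₀ * P * nsq k := by
      intro k
      rw [aux_vmv_dot]
      have e2 : star (h k) ⬝ᵥ υ' = ((r:ℝ):ℂ) * c k := by
        rw [hυ', dotProduct_smul]
        simp [hc, smul_eq_mul]
      have e3 : star υ' ⬝ᵥ (h k) = ((r:ℝ):ℂ) * (starRingEnd ℂ) (c k) := by
        rw [aux_star_dot υ' (h k), e2, _root_.map_mul, Complex.conj_ofReal]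
      rw [e2, e3, show (((r:ℝ):ℂ) * c k) * (((r:ℝ):ℂ) * (starRingEnd ℂ) (c k))
          = (((r:ℝ):ℂ) * ((r:ℝ):ℂ)) * (c k * (starRingEnd ℂ) (c k)) from by ring,
        Complex.mul_conj, ← Complex.ofReal_mul, hr2, ← Complex.ofReal_mul,
        Complex.ofReal_re]
    refine ⟨Fin.cases τ₀ τk, Matrix.vecMulVec υ' (star υ'), ?_, ?_, aux_vmv_psd υ', ?_, ?_⟩
    · intro i
      refine Fin.cases ?_ ?_ i
      · simpa using h0
      · intro k
        simp only [Fin.cases_succ, hτk]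
        exact div_nonneg (mul_nonneg (by linarith) (mul_nonneg (hγ k).le (hnsq0 k))) hlam0
    · rw [Fin.sum_univ_succ]
      simp only [Fin.cases_zero, Fin.cases_succ]
      have e : ∑ k : Fin K, τk k = (1 - τ₀) * (lam / lam) := by
        simp only [hτk]
        rw [← Finset.sum_div, ← Finset.mul_sum, key, mul_div_assoc]
      rw [e]
      have hd : lam / lam ≤ 1 := div_self_le_one lam
      have hd0 : 0 ≤ lam / lam := div_nonneg hlam0 hlam0
      nlinarith
    · simp only [Fin.cases_zero]
      have htrV : (Matrix.vecMulVec υ' (star υ')).trace = ((τ₀ * P : ℝ) : ℂ) := by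
        rw [Matrix.trace]
        have e : ∀ i, (Matrix.vecMulVec υ' (star υ')).diag i
            = ((τ₀ * P : ℝ):ℂ) * ((starRingEnd ℂ) (υ i) * υ i) := by
          intro i
          simp only [Matrix.diag_apply, Matrix.vecMulVec, Matrix.of_apply, Pi.star_apply, hυ',
            Pi.smul_apply, smul_eq_mul, Complex.star_def, _root_.map_mul, Complex.conj_ofReal]
          rw [show (((r:ℝ):ℂ) * υ i) * (((r:ℝ):ℂ) * (starRingEnd ℂ) (υ i))
              = (((r:ℝ):ℂ) * ((r:ℝ):ℂ)) * ((starRingEnd ℂ) (υ i) * υ i) from by ring,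
            ← Complex.ofReal_mul, hr2]
        rw [Finset.sum_congr rfl (fun i _ => e i), ← Finset.mul_sum]
        have e1 : ∑ i, (starRingEnd ℂ) (υ i) * υ i = 1 := by
          rw [← hnorm1]
          simp [dotProduct, Pi.star_apply, Complex.star_def]
        rw [e1, mul_one]
      rw [htrV, Complex.ofReal_re]
    · simp only [Fin.cases_succ]
      rcases eq_or_ne lam 0 with hl0 | hl0
      · have hnsqz : ∀ k, γ k * nsq k = 0 := by
          intro k
          have hsum0 : ∑ j, γ j * nsq j = 0 := by rw [key, hl0]
          exact (Finset.sum_eq_zero_iff_of_nonneg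
            (fun j _ => mul_nonneg (hγ j).le (hnsq0 j))).mp hsum0 k (Finset.mem_univ k)
        have hτkz : ∀ k, τk k = 0 := by
          intro k; rw [hτk]; simp only; rw [hnsqz k]; simp
        rw [Finset.sum_eq_zero fun k _ => by rw [hτkz k, zero_mul]]
        rw [hl0]
        simp
      · have hterm : ∀ k : Fin K,
            τk k * Real.logb 2 (1 + γ k / τk k *
              (star (h k) ⬝ᵥ ((Matrix.vecMulVec υ' (star υ')) *ᵥ h k)).re)
            = τk k * Real.logb 2 (1 + τ₀ / (1 - τ₀) * P * lam) := by
          intro k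
          rcases eq_or_ne (τk k) 0 with hz | hz
          · rw [hz, zero_mul, zero_mul]
          · have h1τ : (1:ℝ) - τ₀ ≠ 0 := by
              intro he; apply hz; rw [hτk]; simp only; rw [he, zero_mul, zero_div]
            have hgn : γ k * nsq k ≠ 0 := by
              intro he; apply hz; rw [hτk]; simp only; rw [he, mul_zero, zero_div]
            have hnsqne : nsq k ≠ 0 := fun he => hgn (by rw [he, mul_zero])
            congr 2
            rw [hqk k, hτk]
            simp only
            field_simp [(hγ k).ne']
        rw [Finset.sum_congr rfl fun k _ => hterm k, ← Finset.sum_mul]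
        have e : ∑ k : Fin K, τk k = 1 - τ₀ := by
          simp only [hτk]
          rw [← Finset.sum_div, ← Finset.mul_sum, key, mul_div_assoc, div_self hl0, mul_one]
        rw [e]
  -- Step B: upper bound
  have hSub : ∀ (τ : Fin (K+1) → ℝ) (V : Matrix (Fin N) (Fin N) ℂ),
      (∀ i, 0 ≤ τ i) → (∑ i, τ i) ≤ 1 → V.PosSemidef → V.trace.re ≤ τ 0 * P →
      ∃ τ₀' ∈ Set.Icc (0:ℝ) 1,
        (∑ k : Fin K, τ k.succ *
            Real.logb 2 (1 + γ k / τ k.succ * (star (h k) ⬝ᵥ (V *ᵥ h k)).re))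
          ≤ (1 - τ₀') * Real.logb 2 (1 + τ₀' / (1 - τ₀') * P * lam) := by
    intro τ V hτ0 hτsum hV htr
    set T : ℝ := ∑ k : Fin K, τ k.succ with hT
    have hT0 : 0 ≤ T := Finset.sum_nonneg fun k _ => hτ0 _
    have hsum' : τ 0 + T = ∑ i, τ i := (Fin.sum_univ_succ τ).symm
    have hτ0T : τ 0 ≤ 1 - T := by linarith
    have hT1 : T ≤ 1 := by have := hτ0 0; linarith
    refine ⟨1 - T, ⟨by linarith, by linarith⟩, ?_⟩
    have hq0 : ∀ k, 0 ≤ (star (h k) ⬝ᵥ (V *ᵥ h k)).re := fun k => hV.re_dotProduct_nonneg (h k)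
    have hcol : ∀ k : Fin K, (fun n => G n k) = ((Real.sqrt (γ k) : ℝ) : ℂ) • h k := by
      intro k; funext n; simp [hG, Pi.smul_apply, smul_eq_mul]
    have h2 : ∀ k : Fin K, ((star fun n => G n k) ⬝ᵥ (V *ᵥ fun n => G n k))
        = ((γ k : ℝ) : ℂ) * (star (h k) ⬝ᵥ (V *ᵥ h k)) := by
      intro k
      rw [hcol k, star_smul, Matrix.mulVec_smul, smul_dotProduct, dotProduct_smul]
      simp only [Complex.star_def, Complex.conj_ofReal, smul_eq_mul]
      rw [← mul_assoc, ← Complex.ofReal_mul, Real.mul_self_sqrt (hγ k).le]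
    have hQ : ∑ k, γ k * (star (h k) ⬝ᵥ (V *ᵥ h k)).re ≤ (1 - T) * P * lam := by
      have h1 := aux_trace_quad_le G V hV lam hlam_ub
      have h3 : ∑ k, γ k * (star (h k) ⬝ᵥ (V *ᵥ h k)).re
          = ∑ k, ((star fun n => G n k) ⬝ᵥ (V *ᵥ fun n => G n k)).re := by
        refine Finset.sum_congr rfl fun k _ => ?_
        rw [h2 k, Complex.re_ofReal_mul]
      have h4 : V.trace.re * lam ≤ (1 - T) * P * lam :=
        mul_le_mul_of_nonneg_right
          (le_trans htr (mul_le_mul_of_nonneg_right hτ0T hP.le)) hlam0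
      rw [h3]; exact le_trans h1 h4
    rcases eq_or_lt_of_le hT0 with hTz | hTpos
    · have hz : ∀ k : Fin K, τ k.succ = 0 := fun k =>
        (Finset.sum_eq_zero_iff_of_nonneg (fun j _ => hτ0 (Fin.succ j))).mp hTz.symm k
          (Finset.mem_univ k)
      rw [Finset.sum_eq_zero fun k _ => by rw [hz k, zero_mul]]
      rw [← hTz]
      norm_num
    · have hTne : T ≠ 0 := hTpos.ne'
      have hw1 : ∑ k : Fin K, τ k.succ / T = 1 := by
        rw [← Finset.sum_div, ← hT, div_self hTne]
      set xs : Fin K → ℝ := fun k => γ k / τ k.succ * (star (h k) ⬝ᵥ (V *ᵥ h k)).re with hxs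
      have hxs0 : ∀ k, 0 ≤ xs k := fun k =>
        mul_nonneg (div_nonneg (hγ k).le (hτ0 _)) (hq0 k)
      have jensen := aux_jensen_log1p (fun k => τ k.succ / T) xs
        (fun k => div_nonneg (hτ0 _) hT0) hw1 hxs0
      have hwx0 : 0 ≤ ∑ k, (τ k.succ / T) * xs k :=
        Finset.sum_nonneg fun k _ => mul_nonneg (div_nonneg (hτ0 _) hT0) (hxs0 k)
      have hsum_wx : ∑ k, (τ k.succ / T) * xs k ≤ ((1 - T) * P * lam) / T := by
        have h1 : ∀ k : Fin K, (τ k.succ / T) * xs k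
            ≤ (γ k * (star (h k) ⬝ᵥ (V *ᵥ h k)).re) / T := by
          intro k
          rcases eq_or_ne (τ k.succ) 0 with h0' | h0'
          · simp only [hxs, h0', zero_div, zero_mul, div_zero]
            exact div_nonneg (mul_nonneg (hγ k).le (hq0 k)) hT0
          · simp only [hxs]
            rw [show τ k.succ / T * (γ k / τ k.succ * (star (h k) ⬝ᵥ V *ᵥ h k).re)
                = γ k * (star (h k) ⬝ᵥ V *ᵥ h k).re / T from by field_simp]
        calc ∑ k, (τ k.succ / T) * xs k
            ≤ ∑ k, (γ k * (star (h k) ⬝ᵥ (V *ᵥ h k)).re) / T :=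
              Finset.sum_le_sum fun k _ => h1 k
          _ = (∑ k, γ k * (star (h k) ⬝ᵥ (V *ᵥ h k)).re) / T := by rw [Finset.sum_div]
          _ ≤ ((1 - T) * P * lam) / T := by gcongr
      have hlog2 : 0 < Real.log 2 := Real.log_pos one_lt_two
      have m1 : ∑ k, (τ k.succ / T) * Real.log (1 + xs k)
          ≤ Real.log (1 + ((1 - T) * P * lam) / T) :=
        le_trans jensen (Real.log_le_log (by linarith) (by linarith))
      rw [show (1:ℝ) - (1 - T) = T from by ring,
        show (1 - T) / T * P * lam = ((1 - T) * P * lam) / T from by ring]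
      calc ∑ k, τ k.succ * Real.logb 2 (1 + γ k / τ k.succ * (star (h k) ⬝ᵥ (V *ᵥ h k)).re)
          = ∑ k, T * ((τ k.succ / T) * (Real.log (1 + xs k) / Real.log 2)) := by
            refine Finset.sum_congr rfl fun k _ => ?_
            rw [Real.logb]
            simp only [hxs]
            field_simp
        _ = (T / Real.log 2) * ∑ k, (τ k.succ / T) * Real.log (1 + xs k) := by
            rw [Finset.mul_sum]
            exact Finset.sum_congr rfl fun k _ => by ring
        _ ≤ (T / Real.log 2) * Real.log (1 + ((1 - T) * P * lam) / T) :=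
            mul_le_mul_of_nonneg_left m1 (by positivity)
        _ = T * Real.logb 2 (1 + ((1 - T) * P * lam) / T) := by rw [Real.logb]; ring
  -- Conclusion
  have hTub : ∀ y ∈ {y : ℝ | ∃ τ₀ ∈ Set.Icc (0:ℝ) 1,
      y = (1 - τ₀) * Real.logb 2 (1 + τ₀ / (1 - τ₀) * P * lam)},
      y ≤ P * lam / Real.log 2 := by
    rintro y ⟨τ₀, ⟨ht0, ht1⟩, rfl⟩
    exact aux_val_le P lam τ₀ hlam0 ht0 ht1 hP.le
  have hbddT : BddAbove {y : ℝ | ∃ τ₀ ∈ Set.Icc (0:ℝ) 1,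
      y = (1 - τ₀) * Real.logb 2 (1 + τ₀ / (1 - τ₀) * P * lam)} := ⟨_, hTub⟩
  have hbddS : BddAbove {x : ℝ | ∃ (τ : Fin (K+1) → ℝ) (V : Matrix (Fin N) (Fin N) ℂ),
      (∀ i, 0 ≤ τ i) ∧ (∑ i, τ i) ≤ 1 ∧ V.PosSemidef ∧ V.trace.re ≤ τ 0 * P ∧
      x = ∑ k : Fin K, τ k.succ *
        Real.logb 2 (1 + γ k / τ k.succ * (star (h k) ⬝ᵥ (V *ᵥ h k)).re)} := by
    refine ⟨P * lam / Real.log 2, ?_⟩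
    rintro x ⟨τ, V, h1, h2, h3, h4, rfl⟩
    obtain ⟨τ₀', hmem, hle⟩ := hSub τ V h1 h2 h3 h4
    exact le_trans hle (hTub _ ⟨τ₀', hmem, rfl⟩)
  apply le_antisymm
  · apply csSup_le
    · exact ⟨0, ⟨fun _ => 0, 0, fun i => le_refl 0, by simp, Matrix.PosSemidef.zero,
        by simp, by simp⟩⟩
    · rintro x ⟨τ, V, h1, h2, h3, h4, rfl⟩
      obtain ⟨τ₀', hmem, hle⟩ := hSub τ V h1 h2 h3 h4
      exact le_trans hle (le_csSup hbddT ⟨τ₀', hmem, rfl⟩)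
  · apply csSup_le
    · exact ⟨0, ⟨0, ⟨le_refl 0, zero_le_one⟩, by simp⟩⟩
    · rintro y ⟨τ₀, ⟨ht0, ht1⟩, rfl⟩
      obtain ⟨τ, V, h1, h2, h3, h4, heq⟩ := memS τ₀ ht0 ht1
      exact le_csSup hbddS ⟨τ, V, h1, h2, h3, h4, heq⟩
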